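/- There is an instance with k = 2 states and one convex ex ante constraint for which the ratio between Sender's optimal utility under the ex ante constraint and under the corresponding ex post constraint is unbounded: with Ω = {0,1}, uniform prior, f(q) = q(1), c = 1/2 + ε for ε ∈ (0,1/2), and u_s(q) = max(0, 2·q(1) − 1), the ex ante optimum equals 1/2 (full revelation is valid) while the ex post optimum equals 2ε/(1+2ε), so the ratio (1/2)/(2ε/(1+2ε)) = (1+2ε)/(4ε) → ∞ as ε → 0. -/

import Mathlib

open MeasureTheory Filter
open scoped ENNReal

lemma integrable_dirac' {f : ℝ → ℝ} (hf : Continuous f) (a : ℝ) :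
    Integrable f (Measure.dirac a) := by
  refine Integrable.mono' (integrable_const |f a|) hf.aestronglyMeasurable ?_
  rw [ae_dirac_eq]
  exact Filter.eventually_pure.2 (le_of_eq (Real.norm_eq_abs _))

lemma integral_twoPoint (c d : ℝ≥0∞) (hc : c ≠ ⊤) (hd : d ≠ ⊤) (a b : ℝ)
    {f : ℝ → ℝ} (hf : Continuous f) :
    ∫ x, f x ∂(c • Measure.dirac a + d • Measure.dirac b)
      = c.toReal * f a + d.toReal * f b := by
  rw [integral_add_measure ((integrable_dirac' hf a).smul_measure hc)
      ((integrable_dirac' hf b).smul_measure hd),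
    integral_smul_measure, integral_smul_measure, integral_dirac, integral_dirac]
  simp [smul_eq_mul]

lemma ae_twoPoint (c d : ℝ≥0∞) (a b : ℝ) {p : ℝ → Prop} (ha : p a) (hb : p b) :
    ∀ᵐ x ∂(c • Measure.dirac a + d • Measure.dirac b), p x := by
  rw [ae_add_measure_iff]
  constructor <;> apply Measure.ae_smul_measure <;> rw [ae_dirac_eq] <;>
    exact Filter.eventually_pure.2 ‹_›

lemma integrable_of_bdd {P : Measure ℝ} [IsProbabilityMeasure P] {f : ℝ → ℝ} (C : ℝ)
    (hf : Continuous f) (h : ∀ᵐ x ∂P, |f x| ≤ C) : Integrable f P :=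
  Integrable.mono' (integrable_const C) hf.aestronglyMeasurable h

example : True := trivial

lemma cont_us : Continuous (fun x : ℝ => max 0 (2 * x - 1)) :=
  continuous_const.max (by fun_prop)

theorem stmt8 (ε : ℝ) (hε : ε ∈ Set.Ioo (0 : ℝ) (1 / 2)) :
    sSup {v : ℝ | ∃ P : Measure ℝ, IsProbabilityMeasure P ∧
        (∀ᵐ x ∂P, x ∈ Set.Icc (0 : ℝ) 1) ∧ (∫ x, x ∂P) = 1 / 2 ∧
        (∫ x, x ∂P) ≤ 1 / 2 + ε ∧ v = ∫ x, max 0 (2 * x - 1) ∂P} = 1 / 2 ∧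
    sSup {v : ℝ | ∃ P : Measure ℝ, IsProbabilityMeasure P ∧
        (∀ᵐ x ∂P, x ∈ Set.Icc (0 : ℝ) 1) ∧ (∫ x, x ∂P) = 1 / 2 ∧
        (∀ᵐ x ∂P, x ≤ 1 / 2 + ε) ∧ v = ∫ x, max 0 (2 * x - 1) ∂P}
      = 2 * ε / (1 + 2 * ε) ∧
    (1 / 2) / (2 * ε / (1 + 2 * ε)) = (1 + 2 * ε) / (4 * ε) ∧
    Tendsto (fun e : ℝ => (1 + 2 * e) / (4 * e)) (nhdsWithin 0 (Set.Ioi 0)) atTop := by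
  obtain ⟨hε0, hεh⟩ := hε
  have hpos : (0:ℝ) < 1 + 2 * ε := by linarith
  refine ⟨?_, ?_, ?_, ?_⟩
  · -- ex ante optimum = 1/2
    apply IsGreatest.csSup_eq
    constructor
    · -- membership: half-half on {0,1}
      refine ⟨ENNReal.ofReal (1/2) • Measure.dirac 0 + ENNReal.ofReal (1/2) • Measure.dirac 1,
        ?_, ?_, ?_, ?_, ?_⟩
      · constructor
        simp only [Measure.add_apply, Measure.smul_apply, smul_eq_mul,
          Measure.dirac_apply_of_mem (Set.mem_univ _), mul_one]
        rw [← ENNReal.ofReal_add (by norm_num) (by norm_num)]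
        norm_num
      · exact ae_twoPoint _ _ _ _ (by norm_num) (by norm_num)
      · rw [integral_twoPoint _ _ ENNReal.ofReal_ne_top ENNReal.ofReal_ne_top _ _ (f := fun x => x) continuous_id]
        simp [ENNReal.toReal_ofReal]
      · rw [integral_twoPoint _ _ ENNReal.ofReal_ne_top ENNReal.ofReal_ne_top _ _ (f := fun x => x) continuous_id]
        simp [ENNReal.toReal_ofReal]
        linarith
      · rw [integral_twoPoint _ _ ENNReal.ofReal_ne_top ENNReal.ofReal_ne_top _ _ cont_us]
        rw [ENNReal.toReal_ofReal (by norm_num)]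
        norm_num
    · rintro w ⟨P, hP, hsupp, hmean, -, hw⟩
      have h1 : Integrable (fun x : ℝ => x) P :=
        integrable_of_bdd 1 continuous_id
          (hsupp.mono fun x hx => abs_le.2 ⟨by linarith [hx.1], hx.2⟩)
      have h2 : Integrable (fun x : ℝ => max 0 (2 * x - 1)) P :=
        integrable_of_bdd 1 cont_us
          (hsupp.mono fun x hx => by
            rw [abs_of_nonneg (le_max_left _ _)]
            exact max_le (by norm_num) (by linarith [hx.2]))
      have := integral_mono_ae h2 h1
        (hsupp.mono fun x hx => max_le hx.1 (by linarith [hx.2]))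
      rw [hw]
      linarith [hmean ▸ this]
  · -- ex post optimum
    set k : ℝ := 4 * ε / (1 + 2 * ε) with hk
    have hknn : 0 ≤ k := by positivity
    apply IsGreatest.csSup_eq
    constructor
    · refine ⟨ENNReal.ofReal (2 * ε / (1 + 2 * ε)) • Measure.dirac 0 +
        ENNReal.ofReal (1 / (1 + 2 * ε)) • Measure.dirac (1/2 + ε), ?_, ?_, ?_, ?_, ?_⟩
      · constructor
        simp only [Measure.add_apply, Measure.smul_apply, smul_eq_mul,
          Measure.dirac_apply_of_mem (Set.mem_univ _), mul_one]
        rw [← ENNReal.ofReal_add (by positivity) (by positivity)]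
        rw [show 2 * ε / (1 + 2 * ε) + 1 / (1 + 2 * ε) = 1 by field_simp; ring]
        simp
      · exact ae_twoPoint _ _ _ _ ⟨le_refl 0, by norm_num⟩
          ⟨by linarith, by linarith⟩
      · rw [integral_twoPoint _ _ ENNReal.ofReal_ne_top ENNReal.ofReal_ne_top _ _ (f := fun x => x) continuous_id]
        rw [ENNReal.toReal_ofReal (by positivity), ENNReal.toReal_ofReal (by positivity)]
        field_simp
        ring
      · exact ae_twoPoint _ _ _ _ (by linarith) (le_refl _)
      · rw [integral_twoPoint _ _ ENNReal.ofReal_ne_top ENNReal.ofReal_ne_top _ _ cont_us]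
        rw [ENNReal.toReal_ofReal (by positivity), ENNReal.toReal_ofReal (by positivity)]
        rw [show (2 : ℝ) * (1/2 + ε) - 1 = 2 * ε by ring,
          show (2 : ℝ) * 0 - 1 = -1 by ring,
          max_eq_right (by linarith : (0:ℝ) ≤ 2 * ε),
          max_eq_left (by norm_num : (-1:ℝ) ≤ 0)]
        field_simp
        norm_num
    · rintro w ⟨P, hP, hsupp, hmean, hpost, hw⟩
      have h1 : Integrable (fun x : ℝ => x) P :=
        integrable_of_bdd 1 continuous_id
          (hsupp.mono fun x hx => abs_le.2 ⟨by linarith [hx.1], hx.2⟩)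
      have h2 : Integrable (fun x : ℝ => max 0 (2 * x - 1)) P :=
        integrable_of_bdd 1 cont_us
          (hsupp.mono fun x hx => by
            rw [abs_of_nonneg (le_max_left _ _)]
            exact max_le (by norm_num) (by linarith [hx.2]))
      have hk1 : Integrable (fun x : ℝ => k * x) P := h1.const_mul k
      have hle : ∀ᵐ x ∂P, max 0 (2 * x - 1) ≤ k * x := by
        filter_upwards [hsupp, hpost] with x hx hx2
        refine max_le (mul_nonneg hknn hx.1) ?_
        rw [hk, div_mul_eq_mul_div, le_div_iff₀ hpos]
        nlinarith
      have := integral_mono_ae h2 hk1 hle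
      rw [integral_const_mul, hmean] at this
      rw [hw]
      calc ∫ x, max 0 (2 * x - 1) ∂P ≤ k * (1/2) := this
        _ = 2 * ε / (1 + 2 * ε) := by rw [hk]; field_simp; ring
  · rw [div_div_div_eq]
    rw [show (1:ℝ) * (1 + 2 * ε) = 1 + 2 * ε by ring, show (2:ℝ) * (2 * ε) = 4 * ε by ring]
  · have heq : (fun e : ℝ => (1 + 2 * e) / (4 * e))
        = fun e => (1 + 2 * e) * (4⁻¹ * e⁻¹) := by
      funext e; rw [div_eq_mul_inv, mul_inv]
    rw [heq]
    refine Tendsto.pos_mul_atTop one_pos ?_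
      (Tendsto.const_mul_atTop (by norm_num) tendsto_inv_nhdsGT_zero)
    have h : Tendsto (fun e : ℝ => 1 + 2 * e) (nhds 0) (nhds 1) := by
      have h2 : Continuous (fun e : ℝ => 1 + 2 * e) := by fun_prop
      simpa using h2.tendsto (0:ℝ)
    exact h.mono_left nhdsWithin_le_nhds
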